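/- Let k be a field, n a positive integer, and R a unital k-subalgebra of the matrix ring M_n(k). Then R is triangularizable if and only if R/rad(R) is isomorphic as a k-algebra to k^m for some positive integer m; moreover, in that case m ≤ n. -/

import Mathlib

open Matrix Submodule Module

set_option maxHeartbeats 1000000
set_option synthInstance.maxHeartbeats 200000

namespace Stmt18

variable {k : Type*} [Field k] {n : ℕ}
variable {R : Subalgebra k (Matrix (Fin n) (Fin n) k)}
variable (b : Basis (Fin n) k (Fin n → k))

/-- strictly-lower entries vanish for triangular operators -/
theorem entry_zero {x : Matrix (Fin n) (Fin n) k}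
    (hx : ∀ i : Fin n, Matrix.toLin' x (b i) ∈ span k (⇑b '' {j | j ≤ i}))
    {l i : Fin n} (h : ¬ l ≤ i) :
    LinearMap.toMatrix b b (Matrix.toLin' x) l i = 0 := by
  rw [LinearMap.toMatrix_apply]
  have := (b.mem_span_image).1 (hx i)
  by_contra hne
  exact h (this (Finsupp.mem_support_iff.2 hne))

variable (R) in
/-- The diagonal map as a linear map. -/
noncomputable def D₀ : R →ₗ[k] (Fin n → k) :=
  Matrix.diagLinearMap (Fin n) k k ∘ₗ (LinearMap.toMatrix b b).toLinearMap ∘ₗ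
    (Matrix.toLin' : Matrix (Fin n) (Fin n) k ≃ₗ[k] _).toLinearMap ∘ₗ R.val.toLinearMap

theorem D₀_apply (x : R) (i : Fin n) :
    D₀ R b x i = LinearMap.toMatrix b b (Matrix.toLin' (x : Matrix (Fin n) (Fin n) k)) i i := rfl

variable (R) in
/-- The diagonal algebra homomorphism attached to a triangularizing basis. -/
noncomputable def D
    (hb : ∀ T ∈ R, ∀ i : Fin n, Matrix.toLin' T (b i) ∈ span k (⇑b '' {j | j ≤ i})) :
    R →ₐ[k] (Fin n → k) :=
  AlgHom.ofLinearMap (D₀ R b)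
    (by
      funext i
      rw [D₀_apply, OneMemClass.coe_one, Matrix.toLin'_one, LinearMap.toMatrix_id,
        Matrix.one_apply_eq, Pi.one_apply])
    (by
      intro x y
      funext i
      rw [Pi.mul_apply, D₀_apply, D₀_apply, D₀_apply, MulMemClass.coe_mul,
        Matrix.toLin'_mul, LinearMap.toMatrix_comp b b b, Matrix.mul_apply]
      refine Finset.sum_eq_single i (fun j _ hj => ?_) (by simp)
      rcases le_or_gt j i with hle | hlt
      · have hne : ¬ i ≤ j := fun hij => hj (le_antisymm hle hij)
        rw [entry_zero b (fun i' => hb _ x.2 i') hne, zero_mul]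
      · rw [entry_zero b (fun i' => hb _ y.2 i') (not_le_of_gt hlt), mul_zero])

theorem D_apply
    (hb : ∀ T ∈ R, ∀ i : Fin n, Matrix.toLin' T (b i) ∈ span k (⇑b '' {j | j ≤ i}))
    (x : R) (i : Fin n) :
    D R b hb x i = LinearMap.toMatrix b b (Matrix.toLin' (x : Matrix (Fin n) (Fin n) k)) i i := rfl


theorem pow_eq_zero_of_D_zero
    (hb : ∀ T ∈ R, ∀ i : Fin n, Matrix.toLin' T (b i) ∈ span k (⇑b '' {j | j ≤ i}))
    (x : R) (hx : D R b hb x = 0) : x ^ n = 0 := by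
  set f := Matrix.toLin' (x : Matrix (Fin n) (Fin n) k) with hf
  have htri : ∀ i : Fin n, f (b i) ∈ span k (⇑b '' {j | j < i}) := by
    intro i
    rw [b.mem_span_image]
    intro l hl
    have hle : l ∈ {j : Fin n | j ≤ i} := (b.mem_span_image).1 (hb _ x.2 i) hl
    have hne : l ≠ i := by
      intro h
      subst h
      have : b.repr (f (b l)) l = 0 := by
        have := congrFun hx l
        rw [D_apply, LinearMap.toMatrix_apply] at this
        exact this
      exact Finsupp.mem_support_iff.1 hl this
    exact lt_of_le_of_ne hle hne
  set W : ℕ → Submodule k (Fin n → k) :=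
    fun N => span k (⇑b '' {j : Fin n | (j : ℕ) < N}) with hW
  have hstep : ∀ N : ℕ, ∀ v ∈ W (N + 1), f v ∈ W N := by
    intro N
    have : W (N + 1) ≤ (W N).comap f := by
      rw [hW]
      refine span_le.2 ?_
      rintro w ⟨j, hj, rfl⟩
      refine mem_comap.2 (span_le.2 ?_ (htri j))
      rintro w' ⟨l, hl, rfl⟩
      refine subset_span ⟨l, ?_, rfl⟩
      have h1 : (l : ℕ) < (j : ℕ) := hl
      have h2 : (j : ℕ) < N + 1 := hj
      exact Set.mem_setOf.2 (by omega)
    exact fun v hv => this hv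
  have hiter : ∀ N : ℕ, ∀ v ∈ W N, (f ^ N) v = 0 := by
    intro N
    induction N with
    | zero =>
      intro v hv
      have hempty : {j : Fin n | (j : ℕ) < 0} = (∅ : Set (Fin n)) := by
        ext j; simp
      rw [hW] at hv
      simp only [hempty, Set.image_empty, span_empty, mem_bot] at hv
      rw [hv, map_zero]
    | succ N ih =>
      intro v hv
      rw [pow_succ, Module.End.mul_apply]
      exact ih _ (hstep N v hv)
  have htopW : W n = ⊤ := by
    show span k (⇑b '' {j : Fin n | (j : ℕ) < n}) = ⊤
    have : {j : Fin n | (j : ℕ) < n} = Set.univ := Set.eq_univ_of_forall fun j => j.isLt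
    rw [this, Set.image_univ, b.span_eq]
  have hfn : f ^ n = 0 := by
    apply LinearMap.ext
    intro v
    rw [LinearMap.zero_apply]
    exact hiter n v (by rw [htopW]; trivial)
  have hmx : ((x : Matrix (Fin n) (Fin n) k)) ^ n = 0 := by
    apply Matrix.toLinAlgEquiv'.injective
    rw [map_pow, map_zero]
    exact hfn
  exact Subtype.ext (by rw [SubmonoidClass.coe_pow]; exact hmx)

theorem kerD_le_jacobson
    (hb : ∀ T ∈ R, ∀ i : Fin n, Matrix.toLin' T (b i) ∈ span k (⇑b '' {j | j ≤ i}))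
    (x : R) (hx : D R b hb x = 0) : x ∈ Ideal.jacobson (⊥ : Ideal R) := by
  refine Ideal.mem_sInf.2 ?_
  rintro M ⟨-, hM⟩
  by_contra hxM
  have hlt : M < M ⊔ Ideal.span {x} :=
    left_lt_sup.2 fun h => hxM (h (Ideal.subset_span rfl))
  have htop : M ⊔ Ideal.span {x} = ⊤ := hM.out.2 _ hlt
  have h1 : (1 : R) ∈ M ⊔ Ideal.span {x} := htop ▸ Submodule.mem_top
  obtain ⟨a, ha, z, hz, hsum⟩ := Submodule.mem_sup.1 h1
  obtain ⟨r, rfl⟩ := Submodule.mem_span_singleton.1 hz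
  have hDrx : D R b hb (r • x) = 0 := by
    rw [smul_eq_mul, _root_.map_mul, hx, mul_zero]
  have hnil : IsNilpotent (r • x) := ⟨n, pow_eq_zero_of_D_zero b hb _ hDrx⟩
  have ha' : a = 1 - r • x := by
    rw [eq_sub_iff_add_eq]
    exact hsum
  have hu : IsUnit a := ha' ▸ hnil.isUnit_one_sub
  exact hM.ne_top (M.eq_top_of_isUnit_mem ha hu)

section CharKer

variable {A : Type*} [Ring A] [Algebra k A]

theorem charKer_max (ψ : A →ₐ[k] k) : (RingHom.ker ψ).IsMaximal := by
  rw [Ideal.isMaximal_iff]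
  constructor
  · intro h
    have : ψ 1 = 0 := h
    rw [_root_.map_one] at this
    exact one_ne_zero this
  · intro J x hle hx hxJ
    have hc : ψ x ≠ 0 := fun h => hx (RingHom.mem_ker.2 h)
    have h1 : (1 : A) - algebraMap k A (ψ x)⁻¹ * x ∈ RingHom.ker ψ := by
      rw [RingHom.mem_ker, map_sub, _root_.map_one, _root_.map_mul, AlgHom.commutes]
      rw [Algebra.algebraMap_self_apply, inv_mul_cancel₀ hc, sub_self]
    have hmem := J.add_mem (hle h1) (J.mul_mem_left (algebraMap k A (ψ x)⁻¹) hxJ)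
    rwa [sub_add_cancel] at hmem

theorem jacobson_le_charKer (ψ : A →ₐ[k] k) :
    Ideal.jacobson (⊥ : Ideal A) ≤ RingHom.ker ψ :=
  sInf_le ⟨bot_le, charKer_max ψ⟩

end CharKer

theorem kerD_eq
    (hb : ∀ T ∈ R, ∀ i : Fin n, Matrix.toLin' T (b i) ∈ span k (⇑b '' {j | j ≤ i}))
    (x : R) : D R b hb x = 0 ↔ x ∈ Ideal.jacobson (⊥ : Ideal R) := by
  constructor
  · exact kerD_le_jacobson b hb x
  · intro h
    funext i
    have := jacobson_le_charKer ((Pi.evalAlgHom k (fun _ => k) i).comp (D R b hb)) h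
    rw [RingHom.mem_ker] at this
    exact this


section Surj

variable {A : Type*} [Ring A] [Algebra k A]

theorem surj_pi_of_injective {m : ℕ} (χ : Fin m → (A →ₐ[k] k))
    (hinj : Function.Injective χ) :
    Function.Surjective ⇑(Pi.algHom k (fun _ : Fin m => k) χ) := by
  set Φ := Pi.algHom k (fun _ : Fin m => k) χ with hΦ
  suffices hs : Function.Surjective ⇑Φ.toLinearMap by exact hs
  rw [← LinearMap.range_eq_top (f := Φ.toLinearMap)]
  by_contra hne
  have hlt : LinearMap.range Φ.toLinearMap < ⊤ := lt_top_iff_ne_top.2 hne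
  obtain ⟨g, hg0, hker⟩ := Submodule.exists_dual_map_eq_bot_of_lt_top hlt inferInstance
  have hsingle : ∀ (y : Fin m → k) (i : Fin m),
      Pi.single i (y i) = y i • (Pi.single i (1 : k) : Fin m → k) := by
    intro y i
    rw [← Pi.single_smul, smul_eq_mul, mul_one]
  have hgsum : ∀ y : Fin m → k, g y = ∑ i, y i • g (Pi.single i 1) := by
    intro y
    conv_lhs => rw [← Finset.univ_sum_single y]
    rw [map_sum]
    refine Finset.sum_congr rfl fun i _ => ?_
    rw [hsingle y i, _root_.map_smul]
  have hrel : ∀ a : A, ∑ i, g (Pi.single i 1) • (χ i a) = 0 := by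
    intro a
    have hmem : g (Φ.toLinearMap a) ∈ (⊥ : Submodule k k) := by
      rw [← hker]
      exact Submodule.mem_map_of_mem ⟨a, rfl⟩
    rw [Submodule.mem_bot] at hmem
    rw [hgsum] at hmem
    rw [← hmem]
    refine Finset.sum_congr rfl fun i _ => ?_
    rw [smul_eq_mul, smul_eq_mul, mul_comm]
    rfl
  have li : LinearIndependent k (fun f : A →* k => (f : A → k)) :=
    linearIndependent_monoidHom A k
  have hTinj : Function.Injective (fun i => ((χ i : A →* k) : A →* k)) := by
    intro i j h
    refine hinj (AlgHom.ext fun a => ?_)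
    exact DFunLike.congr_fun h a
  have li2 := li.comp _ hTinj
  have hc : ∀ i, g (Pi.single i 1) = 0 := by
    refine Fintype.linearIndependent_iff.1 li2 _ (funext fun a => ?_)
    have := hrel a
    simpa using this
  apply hg0
  apply LinearMap.ext
  intro y
  rw [hgsum y]
  simp [hc]

end Surj

theorem forward (hn : 0 < n)
    (b : Basis (Fin n) k (Fin n → k))
    (hb : ∀ T ∈ R, ∀ i : Fin n, Matrix.toLin' T (b i) ∈ span k (⇑b '' {j | j ≤ i})) :
    ∃ m : ℕ, 0 < m ∧ ∃ φ : R →ₐ[k] (Fin m → k), Function.Surjective ⇑φ ∧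
      ∀ x : R, φ x = 0 ↔ x ∈ Ideal.jacobson (⊥ : Ideal R) := by
  classical
  set ψ : Fin n → (R →ₐ[k] k) :=
    fun i => (Pi.evalAlgHom k (fun _ => k) i).comp (D R b hb) with hψdef
  set t : Finset (R →ₐ[k] k) := Finset.image ψ Finset.univ with ht
  have htne : t.Nonempty := ⟨ψ ⟨0, hn⟩, Finset.mem_image_of_mem _ (Finset.mem_univ _)⟩
  refine ⟨t.card, Finset.card_pos.2 htne, ?_⟩
  set e := t.equivFin with he
  set χ : Fin t.card → (R →ₐ[k] k) := fun j => (e.symm j : t).1 with hχ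
  have hχinj : Function.Injective χ := by
    intro i j h
    have := e.symm.injective (Subtype.ext h)
    exact this
  refine ⟨Pi.algHom k (fun _ => k) χ, surj_pi_of_injective χ hχinj, ?_⟩
  intro x
  rw [← kerD_eq b hb x]
  constructor
  · intro h
    funext i
    have hψm : ψ i ∈ t := Finset.mem_image_of_mem _ (Finset.mem_univ i)
    have h0 : χ (e ⟨ψ i, hψm⟩) x = 0 := by
      have := congrFun h (e ⟨ψ i, hψm⟩)
      exact this
    have hval : χ (e ⟨ψ i, hψm⟩) = ψ i := by
      rw [hχ]
      simp
    rw [hval] at h0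
    exact h0
  · intro h
    funext j
    show χ j x = 0
    have hmem : χ j ∈ t := (e.symm j).2
    obtain ⟨i, -, hi⟩ := Finset.mem_image.1 hmem
    rw [← hi]
    show D R b hb x i = 0
    rw [h]
    rfl


section Eig

theorem mapQ_mk {U : Submodule k (Fin n → k)} {f : (Fin n → k) →ₗ[k] (Fin n → k)}
    (h : U ≤ U.comap f) (v : Fin n → k) :
    U.mapQ U f h (U.mkQ v) = U.mkQ (f v) := by
  rw [Submodule.mkQ_apply, Submodule.mapQ_apply, Submodule.mkQ_apply]

variable (R) in
/-- action of `R` on the quotient by an invariant subspace, as a linear map in the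
ring variable -/
noncomputable def actQ (U : Submodule k (Fin n → k))
    (hU : ∀ x : R, ∀ u ∈ U, Matrix.toLin' (x : Matrix (Fin n) (Fin n) k) u ∈ U)
    (q : (Fin n → k) ⧸ U) : R →ₗ[k] ((Fin n → k) ⧸ U) where
  toFun x := U.mapQ U (Matrix.toLin' (x : Matrix (Fin n) (Fin n) k))
    (fun u hu => hU x u hu) q
  map_add' x y := by
    obtain ⟨v, rfl⟩ := U.mkQ_surjective q
    rw [mapQ_mk, mapQ_mk, mapQ_mk]
    rw [show ((x + y : R) : Matrix (Fin n) (Fin n) k)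
      = (x : Matrix (Fin n) (Fin n) k) + (y : Matrix (Fin n) (Fin n) k) from rfl]
    rw [map_add, LinearMap.add_apply, map_add]
  map_smul' c x := by
    obtain ⟨v, rfl⟩ := U.mkQ_surjective q
    rw [RingHom.id_apply, mapQ_mk, mapQ_mk]
    rw [show ((c • x : R) : Matrix (Fin n) (Fin n) k)
      = c • (x : Matrix (Fin n) (Fin n) k) from rfl]
    rw [_root_.map_smul, LinearMap.smul_apply, _root_.map_smul]

theorem actQ_mk {U : Submodule k (Fin n → k)}
    (hU : ∀ x : R, ∀ u ∈ U, Matrix.toLin' (x : Matrix (Fin n) (Fin n) k) u ∈ U)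
    (v : Fin n → k) (x : R) :
    actQ R U hU (U.mkQ v) x = U.mkQ (Matrix.toLin' (x : Matrix (Fin n) (Fin n) k) v) :=
  mapQ_mk (fun u hu => hU x u hu) v

theorem actQ_mul {U : Submodule k (Fin n → k)}
    (hU : ∀ x : R, ∀ u ∈ U, Matrix.toLin' (x : Matrix (Fin n) (Fin n) k) u ∈ U)
    (q : (Fin n → k) ⧸ U) (x y : R) :
    actQ R U hU q (x * y) = actQ R U hU (actQ R U hU q y) x := by
  obtain ⟨v, rfl⟩ := U.mkQ_surjective q
  rw [actQ_mk, actQ_mk, actQ_mk]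
  rw [show ((x * y : R) : Matrix (Fin n) (Fin n) k)
    = (x : Matrix (Fin n) (Fin n) k) * (y : Matrix (Fin n) (Fin n) k) from rfl]
  rw [Matrix.toLin'_mul, LinearMap.comp_apply]

theorem actQ_one {U : Submodule k (Fin n → k)}
    (hU : ∀ x : R, ∀ u ∈ U, Matrix.toLin' (x : Matrix (Fin n) (Fin n) k) u ∈ U)
    (q : (Fin n → k) ⧸ U) : actQ R U hU q 1 = q := by
  obtain ⟨v, rfl⟩ := U.mkQ_surjective q
  rw [actQ_mk]
  rw [show ((1 : R) : Matrix (Fin n) (Fin n) k) = 1 from rfl, Matrix.toLin'_one,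
    LinearMap.id_apply]

theorem actQ_algebraMap {U : Submodule k (Fin n → k)}
    (hU : ∀ x : R, ∀ u ∈ U, Matrix.toLin' (x : Matrix (Fin n) (Fin n) k) u ∈ U)
    (q : (Fin n → k) ⧸ U) (c : k) : actQ R U hU q (algebraMap k R c) = c • q := by
  obtain ⟨v, rfl⟩ := U.mkQ_surjective q
  rw [actQ_mk]
  rw [show ((algebraMap k R c : R) : Matrix (Fin n) (Fin n) k)
    = algebraMap k (Matrix (Fin n) (Fin n) k) c from rfl,
    Algebra.algebraMap_eq_smul_one, _root_.map_smul, LinearMap.smul_apply,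
    Matrix.toLin'_one, LinearMap.id_apply, _root_.map_smul]

theorem exists_eigvec {m : ℕ} (φ : R →ₐ[k] (Fin m → k))
    (hsurj : Function.Surjective ⇑φ)
    (hker : ∀ x : R, φ x = 0 ↔ x ∈ Ideal.jacobson (⊥ : Ideal R))
    (U : Submodule k (Fin n → k))
    (hU : ∀ x : R, ∀ u ∈ U, Matrix.toLin' (x : Matrix (Fin n) (Fin n) k) u ∈ U)
    (hUtop : U ≠ ⊤) :
    ∃ v : Fin n → k, v ∉ U ∧ ∀ x : R,
      Matrix.toLin' (x : Matrix (Fin n) (Fin n) k) v ∈ U ⊔ span k {v} := by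
  classical
  set L : ((Fin n → k) ⧸ U) → (R →ₗ[k] ((Fin n → k) ⧸ U)) := actQ R U hU with hL
  have hnt : Nontrivial ((Fin n → k) ⧸ U) :=
    Submodule.Quotient.nontrivial_iff.2 hUtop
  -- minimal nonzero "orbit" submodule
  set S : Set ℕ :=
    {d | ∃ q : (Fin n → k) ⧸ U, q ≠ 0 ∧ finrank k (LinearMap.range (L q)) = d} with hS
  have hSne : S.Nonempty := by
    obtain ⟨q1, hq1⟩ := exists_ne (0 : (Fin n → k) ⧸ U)
    exact ⟨_, q1, hq1, rfl⟩
  obtain ⟨q₀, hq₀, hd⟩ := Nat.sInf_mem hSne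
  have hmin : ∀ q : (Fin n → k) ⧸ U, q ≠ 0 →
      finrank k (LinearMap.range (L q₀)) ≤ finrank k (LinearMap.range (L q)) := by
    intro q hq
    rw [hd]
    exact Nat.sInf_le ⟨q, hq, rfl⟩
  set M : Ideal R :=
    { carrier := {x : R | L q₀ x = 0}
      add_mem' := by
        intro a b ha hb
        show L q₀ (a + b) = 0
        rw [map_add, ha, hb, add_zero]
      zero_mem' := by
        show L q₀ 0 = 0
        rw [map_zero]
      smul_mem' := by
        intro r x hx
        show L q₀ (r • x) = 0
        rw [smul_eq_mul, actQ_mul, show L q₀ x = 0 from hx]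
        show L 0 r = 0
        rw [hL]
        have : actQ R U hU (U.mkQ 0) r = 0 := by
          rw [actQ_mk, map_zero, map_zero]
        rwa [map_zero] at this } with hM
  have hmem_M : ∀ x : R, x ∈ M ↔ L q₀ x = 0 := fun x => Iff.rfl
  have hMne1 : (1 : R) ∉ M := by
    rw [hmem_M]
    rw [hL, actQ_one]
    exact hq₀
  have hMmax : M.IsMaximal := by
    rw [Ideal.isMaximal_iff]
    refine ⟨hMne1, ?_⟩
    intro J x hle hx hxJ
    have hu₀ : L q₀ x ≠ 0 := fun h => hx ((hmem_M x).2 h)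
    set g : (Submodule.restrictScalars k J) →ₗ[k] ((Fin n → k) ⧸ U) :=
      (L q₀).comp (Submodule.subtype _) with hg
    set Jw := LinearMap.range g with hJw
    have hWu0_le : LinearMap.range (L (L q₀ x)) ≤ Jw := by
      rintro _ ⟨r, rfl⟩
      refine ⟨⟨r * x, J.mul_mem_left r hxJ⟩, ?_⟩
      show L q₀ (r * x) = L (L q₀ x) r
      rw [hL, actQ_mul]
    have hJw_le : Jw ≤ LinearMap.range (L q₀) := by
      rintro _ ⟨⟨y, hy⟩, rfl⟩
      exact ⟨y, rfl⟩
    have hrank : finrank k (LinearMap.range (L q₀)) ≤ finrank k Jw :=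
      le_trans (hmin _ hu₀) (Submodule.finrank_mono hWu0_le)
    have hJweq : Jw = LinearMap.range (L q₀) :=
      Submodule.eq_of_le_of_finrank_le hJw_le hrank
    have hq0Jw : q₀ ∈ Jw := by
      rw [hJweq]
      exact ⟨1, actQ_one hU q₀⟩
    obtain ⟨⟨y, hy⟩, hyq⟩ := hq0Jw
    have hyq' : L q₀ y = q₀ := hyq
    have hy1 : y - 1 ∈ M := by
      rw [hmem_M, map_sub, hyq', hL, actQ_one, sub_self]
    rw [show (1 : R) = y - (y - 1) from (sub_sub_cancel y 1).symm]
    exact J.sub_mem hy (hle hy1)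
  have hJac : Ideal.jacobson (⊥ : Ideal R) ≤ M := sInf_le ⟨bot_le, hMmax⟩
  have hex : ∃ i : Fin m, ∀ x ∈ M, φ x i = 0 := by
    by_contra hc
    push_neg at hc
    choose xf hxfM hxf0 using hc
    choose u hu using fun i => hsurj ((φ (xf i) i)⁻¹ • (Pi.single (M := fun _ : Fin m => k) i 1))
    set z := ∑ i, u i * xf i with hz
    have hzM : z ∈ M := Submodule.sum_mem _ fun i _ => M.mul_mem_left (u i) (hxfM i)
    have hφz : φ z = 1 := by
      rw [hz, map_sum]
      funext j
      rw [Finset.sum_apply]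
      have hterm : ∀ i, (φ (u i * xf i)) j
          = ((φ (xf i) i)⁻¹ • (Pi.single (M := fun _ : Fin m => k) i 1)) j * φ (xf i) j := by
        intro i
        rw [_root_.map_mul, hu i]
        rfl
      rw [Finset.sum_congr rfl fun i _ => hterm i, Finset.sum_eq_single j]
      · rw [Pi.smul_apply, Pi.single_eq_same, smul_eq_mul, mul_one,
          inv_mul_cancel₀ (hxf0 j), Pi.one_apply]
      · intro i _ hij
        rw [Pi.smul_apply, Pi.single_eq_of_ne (Ne.symm hij), smul_eq_mul, mul_zero, zero_mul]
      · intro h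
        exact absurd (Finset.mem_univ j) h
    have h1M : (1 : R) ∈ M := by
      have hz1 : z - 1 ∈ Ideal.jacobson (⊥ : Ideal R) :=
        (hker _).1 (by rw [map_sub, hφz, _root_.map_one, sub_self])
      have h2 := M.sub_mem hzM (hJac hz1)
      rwa [sub_sub_cancel] at h2
    exact hMne1 h1M
  obtain ⟨i, hi⟩ := hex
  set χ : R →ₐ[k] k := (Pi.evalAlgHom k (fun _ => k) i).comp φ with hχ
  have hMN : M ≤ RingHom.ker χ := fun x hx => RingHom.mem_ker.2 (hi x hx)
  have hMeq : M = RingHom.ker χ := hMmax.eq_of_le (charKer_max χ).ne_top hMN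
  have hact : ∀ x : R, L q₀ x = (φ x i) • q₀ := by
    intro x
    have hmem : x - algebraMap k R (φ x i) ∈ RingHom.ker χ := by
      rw [RingHom.mem_ker, map_sub, AlgHom.commutes]
      show φ x i - algebraMap k k (φ x i) = 0
      rw [Algebra.algebraMap_self_apply, sub_self]
    rw [← hMeq, hmem_M, map_sub] at hmem
    have halg : L q₀ (algebraMap k R (φ x i)) = (φ x i) • q₀ := by
      rw [hL, actQ_algebraMap]
    rw [halg] at hmem
    exact sub_eq_zero.1 hmem
  obtain ⟨v, hv⟩ := U.mkQ_surjective q₀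
  have hvU : v ∉ U := by
    intro hvu
    apply hq₀
    rw [← hv, Submodule.mkQ_apply, Submodule.Quotient.mk_eq_zero]
    exact hvu
  refine ⟨v, hvU, ?_⟩
  intro x
  have hdiff : Matrix.toLin' (x : Matrix (Fin n) (Fin n) k) v - (φ x i) • v ∈ U := by
    rw [← Submodule.Quotient.mk_eq_zero U, ← Submodule.mkQ_apply, map_sub, _root_.map_smul,
      hv]
    have : U.mkQ (Matrix.toLin' (x : Matrix (Fin n) (Fin n) k) v) = L q₀ x := by
      rw [hL, ← hv, actQ_mk]
    rw [this, hact, sub_self]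
  have heq : Matrix.toLin' (x : Matrix (Fin n) (Fin n) k) v
      = (Matrix.toLin' (x : Matrix (Fin n) (Fin n) k) v - (φ x i) • v) + (φ x i) • v := by
    rw [sub_add_cancel]
  rw [heq]
  exact Submodule.add_mem _ (Submodule.mem_sup_left hdiff)
    (Submodule.mem_sup_right (Submodule.smul_mem _ _ (Submodule.mem_span_singleton_self v)))

end Eig


theorem backward (hn : 0 < n) {m : ℕ} (φ : R →ₐ[k] (Fin m → k))
    (hsurj : Function.Surjective ⇑φ)
    (hker : ∀ x : R, φ x = 0 ↔ x ∈ Ideal.jacobson (⊥ : Ideal R)) :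
    ∃ b : Basis (Fin n) k (Fin n → k), ∀ T ∈ R, ∀ i : Fin n,
      Matrix.toLin' T (b i) ∈ span k (⇑b '' {j | j ≤ i}) := by
  classical
  set P : Submodule k (Fin n → k) → Prop :=
    fun U => ∀ x : R, ∀ u ∈ U, Matrix.toLin' (x : Matrix (Fin n) (Fin n) k) u ∈ U with hP
  have eig : ∀ U, P U → U ≠ ⊤ → ∃ v : Fin n → k, v ∉ U ∧ ∀ x : R,
      Matrix.toLin' (x : Matrix (Fin n) (Fin n) k) v ∈ U ⊔ span k {v} :=
    fun U hU hUt => exists_eigvec φ hsurj hker U hU hUt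
  set ev : Submodule k (Fin n → k) → (Fin n → k) := fun U =>
    if h : P U ∧ U ≠ ⊤ then (eig U h.1 h.2).choose else 0 with hev
  set step : Submodule k (Fin n → k) → Submodule k (Fin n → k) :=
    fun U => U ⊔ span k {ev U} with hstep
  set chain : ℕ → Submodule k (Fin n → k) := fun i => step^[i] ⊥ with hchain
  have hchainsucc : ∀ i : ℕ, chain (i + 1) = chain i ⊔ span k {ev (chain i)} := by
    intro i
    show step^[i + 1] ⊥ = step^[i] ⊥ ⊔ span k {ev (step^[i] ⊥)}
    rw [Function.iterate_succ_apply']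
  have hchain0 : chain 0 = ⊥ := rfl
  have hfinV : finrank k (Fin n → k) = n := by
    rw [Module.finrank_fin_fun]
  have key : ∀ i : ℕ, P (chain i) ∧ finrank k (chain i) = min i n := by
    intro i
    induction i with
    | zero =>
      constructor
      · intro x u hu
        rw [hchain0] at hu ⊢
        rw [(Submodule.mem_bot k).1 hu, map_zero]
        exact Submodule.zero_mem ⊥
      · rw [hchain0, finrank_bot]
        omega
    | succ i ih =>
      by_cases htop : chain i = ⊤
      · have hcond : ¬ (P (chain i) ∧ chain i ≠ ⊤) := fun h => h.2 htop
        have hev0 : ev (chain i) = 0 := by rw [hev]; exact dif_neg hcond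
        have hch : chain (i + 1) = chain i := by
          rw [hchainsucc, hev0, Submodule.span_zero_singleton, sup_bot_eq]
        have hmn : min i n = n := by
          rw [← ih.2, htop, finrank_top]
          exact hfinV
        refine ⟨by rw [hch]; exact ih.1, ?_⟩
        rw [hch, ih.2]
        omega
      · have hcond : P (chain i) ∧ chain i ≠ ⊤ := ⟨ih.1, htop⟩
        have hev1 : ev (chain i) = (eig (chain i) hcond.1 hcond.2).choose := by
          rw [hev]; exact dif_pos hcond
        obtain ⟨hv1, hv2⟩ := (eig (chain i) hcond.1 hcond.2).choose_spec
        set v := (eig (chain i) hcond.1 hcond.2).choose with hvdef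
        have hch : chain (i + 1) = chain i ⊔ span k {v} := by rw [hchainsucc, hev1]
        constructor
        · intro x u hu
          rw [hch] at hu ⊢
          obtain ⟨a, ha, w, hw, rfl⟩ := Submodule.mem_sup.1 hu
          obtain ⟨c, rfl⟩ := Submodule.mem_span_singleton.1 hw
          rw [map_add, _root_.map_smul]
          exact Submodule.add_mem _ (Submodule.mem_sup_left (ih.1 x a ha))
            (Submodule.smul_mem _ c (hv2 x))
        · rw [hch]
          have hv0 : v ≠ 0 := fun h => hv1 (h ▸ (chain i).zero_mem)
          have hinf : chain i ⊓ span k {v} = ⊥ := by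
            rw [eq_bot_iff]
            rintro w ⟨hwc, hws⟩
            obtain ⟨c, rfl⟩ := Submodule.mem_span_singleton.1 hws
            rcases eq_or_ne c 0 with rfl | hc
            · rw [zero_smul]; exact Submodule.zero_mem ⊥
            · exact absurd (by
                have := (chain i).smul_mem c⁻¹ hwc
                rwa [inv_smul_smul₀ hc] at this) hv1
          have hsum := Submodule.finrank_sup_add_finrank_inf_eq (chain i) (span k {v})
          rw [hinf, finrank_bot, add_zero, finrank_span_singleton hv0, ih.2] at hsum
          have hne : finrank k (chain i) ≠ n := fun h =>
            htop (Submodule.eq_top_of_finrank_eq (by rw [h, hfinV]))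
          have hle' : finrank k (chain i) ≤ n := by
            have := Submodule.finrank_le (chain i)
            rwa [hfinV] at this
          have h2 := ih.2
          omega
  have hchne : ∀ i : Fin n, chain i ≠ ⊤ := by
    intro i h
    have h2 := (key i).2
    rw [h, finrank_top, hfinV] at h2
    have := i.isLt
    omega
  set bv : Fin n → (Fin n → k) := fun i => ev (chain i) with hbv
  have hbvspec : ∀ i : Fin n, bv i ∉ chain i ∧ ∀ x : R,
      Matrix.toLin' (x : Matrix (Fin n) (Fin n) k) (bv i) ∈ chain i ⊔ span k {bv i} := by
    intro i
    have hcond : P (chain i) ∧ chain i ≠ ⊤ := ⟨(key i).1, hchne i⟩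
    have hev1 : bv i = (eig (chain i) hcond.1 hcond.2).choose := by
      rw [hbv, hev]
      exact dif_pos hcond
    rw [hev1]
    exact (eig (chain i) hcond.1 hcond.2).choose_spec
  have hbvchain : ∀ i : Fin n, chain ((i : ℕ) + 1) = chain i ⊔ span k {bv i} :=
    fun i => hchainsucc i
  have hspan : ∀ j : ℕ, j ≤ n → chain j = span k (bv '' {l : Fin n | (l : ℕ) < j}) := by
    intro j
    induction j with
    | zero =>
      intro _
      rw [hchain0]
      rw [show {l : Fin n | (l : ℕ) < 0} = (∅ : Set (Fin n)) by ext l; simp]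
      rw [Set.image_empty, span_empty]
    | succ j ihj =>
      intro hj1
      have hj : j < n := hj1
      have hev1 : ev (chain j) = bv ⟨j, hj⟩ := rfl
      rw [hchainsucc, hev1, ihj (le_of_lt hj)]
      have hset : {l : Fin n | (l : ℕ) < j + 1}
          = insert (⟨j, hj⟩ : Fin n) {l : Fin n | (l : ℕ) < j} := by
        ext l
        simp only [Set.mem_setOf_eq, Set.mem_insert_iff, Nat.lt_succ_iff_lt_or_eq, Fin.ext_iff]
        tauto
      rw [hset, Set.image_insert_eq, Submodule.span_insert, sup_comm]
  have htopn : chain n = ⊤ := by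
    have h2 := (key n).2
    rw [min_self] at h2
    exact Submodule.eq_top_of_finrank_eq (by rw [h2, hfinV])
  have hrange : ⊤ ≤ span k (Set.range bv) := by
    rw [← htopn, hspan n le_rfl]
    rw [show {l : Fin n | (l : ℕ) < n} = Set.univ from Set.eq_univ_of_forall fun l => l.isLt]
    rw [Set.image_univ]
  have hcard : Fintype.card (Fin n) = finrank k (Fin n → k) := by
    rw [Fintype.card_fin, hfinV]
  refine ⟨basisOfTopLeSpanOfCardEqFinrank bv hrange hcard, ?_⟩
  intro T hT i
  rw [coe_basisOfTopLeSpanOfCardEqFinrank]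
  have hmem := (hbvspec i).2 ⟨T, hT⟩
  rw [← hbvchain i] at hmem
  rw [hspan ((i : ℕ) + 1) i.isLt] at hmem
  have hsets : {l : Fin n | (l : ℕ) < (i : ℕ) + 1} = {j : Fin n | j ≤ i} := by
    ext l
    simp only [Set.mem_setOf_eq, Nat.lt_succ_iff, Fin.le_def]
  rw [hsets] at hmem
  exact hmem


theorem part2 (hn : 0 < n) (m : ℕ)
    (φ : R →ₐ[k] (Fin m → k)) (hsurj : Function.Surjective ⇑φ)
    (hker : ∀ x : R, φ x = 0 ↔ x ∈ Ideal.jacobson (⊥ : Ideal R)) : m ≤ n := by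
  classical
  obtain ⟨b, hb⟩ := backward hn φ hsurj hker
  set ψ : Fin n → (R →ₐ[k] k) :=
    fun l => (Pi.evalAlgHom k (fun _ => k) l).comp (D R b hb) with hψ
  set χ : Fin m → (R →ₐ[k] k) :=
    fun j => (Pi.evalAlgHom k (fun _ => k) j).comp φ with hχ
  have hχinj : Function.Injective χ := by
    intro j j' h
    by_contra hne
    obtain ⟨x, hx⟩ := hsurj (Pi.single (M := fun _ : Fin m => k) j 1)
    have h1 : χ j x = 1 := by
      show φ x j = 1
      rw [hx, Pi.single_eq_same]
    have h2 : χ j' x = 0 := by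
      show φ x j' = 0
      rw [hx, Pi.single_eq_of_ne (Ne.symm hne)]
    rw [h] at h1
    rw [h1] at h2
    exact one_ne_zero h2
  have hkerle : ∀ j, (⨅ l, LinearMap.ker (ψ l).toLinearMap)
      ≤ LinearMap.ker (χ j).toLinearMap := by
    intro j x hx
    rw [LinearMap.mem_ker, AlgHom.toLinearMap_apply]
    have hDx : D R b hb x = 0 := by
      funext l
      have hl := (Submodule.mem_iInf _).1 hx l
      rw [LinearMap.mem_ker, AlgHom.toLinearMap_apply] at hl
      exact hl
    have hφ0 : φ x = 0 := (hker x).2 (kerD_le_jacobson b hb x hDx)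
    show φ x j = 0
    rw [hφ0]
    rfl
  have hex : ∀ j, ∃ l, χ j = ψ l := by
    intro j
    have hsp := mem_span_of_iInf_ker_le_ker
      (L := fun l => (ψ l).toLinearMap) (K := (χ j).toLinearMap) (hkerle j)
    obtain ⟨c, hc⟩ := (mem_span_range_iff_exists_fun k).1 hsp
    by_contra hne
    push_neg at hne
    have li : LinearIndependent k (fun f : R →* k => (f : R → k)) :=
      linearIndependent_monoidHom R k
    have hnm : ((χ j : R →* k)) ∉ Set.range (fun l : Fin n => (ψ l : R →* k)) := by
      rintro ⟨l, hl⟩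
      exact hne l (AlgHom.ext fun a => (DFunLike.congr_fun hl a).symm)
    have hnotspan := li.notMem_span_image
      (s := Set.range fun l : Fin n => (ψ l : R →* k)) hnm
    apply hnotspan
    have himg : (fun f : R →* k => (f : R → k)) '' (Set.range fun l => (ψ l : R →* k))
        = Set.range (fun l : Fin n => (((ψ l : R →* k)) : R → k)) := by
      rw [← Set.range_comp]
      rfl
    rw [himg]
    refine (mem_span_range_iff_exists_fun k).2 ⟨c, ?_⟩
    funext a
    have happ := LinearMap.congr_fun hc a
    rw [LinearMap.sum_apply] at happ
    have hsum : ∀ l, (c l • (ψ l).toLinearMap) a = c l • (ψ l a) := fun l => rfl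
    rw [Finset.sum_congr rfl fun l _ => hsum l] at happ
    show (∑ l, c l • (((ψ l : R →* k)) : R → k)) a = χ j a
    rw [Finset.sum_apply]
    exact happ
  choose lof hlof using hex
  have hlinj : Function.Injective lof := fun j j' h => hχinj (by rw [hlof j, hlof j', h])
  have hcard := Fintype.card_le_of_injective lof hlinj
  simpa using hcard

end Stmt18


/-- McCoy-type theorem: a unital `k`-subalgebra `R` of `M_n(k)` is
triangularizable iff `R/rad(R) ≅ k^m` as `k`-algebras for some positive integer `m`
(witnessed by a surjective `k`-algebra homomorphism `R → k^m` whose kernel is the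
Jacobson radical `rad(R) = Ideal.jacobson ⊥`, the intersection of the maximal left
ideals); moreover, in that case `m ≤ n`. -/
theorem stmt_18 {k : Type*} [Field k] {n : ℕ} (hn : 0 < n)
    (R : Subalgebra k (Matrix (Fin n) (Fin n) k)) :
    ((∃ b : Basis (Fin n) k (Fin n → k), ∀ T ∈ R, ∀ i : Fin n,
        Matrix.toLin' T (b i) ∈ Submodule.span k (⇑b '' {j | j ≤ i})) ↔
      ∃ m : ℕ, 0 < m ∧ ∃ φ : R →ₐ[k] (Fin m → k), Function.Surjective ⇑φ ∧
        ∀ x : R, φ x = 0 ↔ x ∈ Ideal.jacobson (⊥ : Ideal R)) ∧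
    (∀ m : ℕ, 0 < m →
      (∃ φ : R →ₐ[k] (Fin m → k), Function.Surjective ⇑φ ∧
        ∀ x : R, φ x = 0 ↔ x ∈ Ideal.jacobson (⊥ : Ideal R)) → m ≤ n) := by
  constructor
  · constructor
    · rintro ⟨b, hb⟩
      exact Stmt18.forward hn b hb
    · rintro ⟨m, hm, φ, hsurj, hker⟩
      exact Stmt18.backward hn φ hsurj hker
  · rintro m hm ⟨φ, hsurj, hker⟩
    exact Stmt18.part2 hn m φ hsurj hker
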